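/- arXiv:1803.09521 — 2 statements merged into one kernel-verified Lean document; each statement's English description precedes it below -/
import Mathlib

section
/- Let (𝒜,T) be a crystallographic Tits arrangement with respect to R, with all root bases B^K indexed compatibly. Set I = {1,…,r}, A = 𝒦 (the set of chambers), let C^K be the Cartan matrix at K, and for i ∈ I let ρ_i: A → A send each chamber K to the unique chamber i-adjacent to K. Then 𝒞(I, A, (ρ_i)_{i∈I}, (C^K)_{K∈𝒦}) is a connected Cartan graph. -/
open Set

noncomputable section

section Arrangements

variable {V : Type*} [AddCommGroup V] [Module ℝ V] [TopologicalSpace V]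

/-- The kernel of a linear functional, as a subset of `V`. -/
def dualKer (α : Module.Dual ℝ V) : Set V := {v | α v = 0}

/-- A linear hyperplane: the kernel of a nonzero linear functional. -/
def IsLinearHyperplane (H : Set V) : Prop :=
  ∃ α : Module.Dual ℝ V, α ≠ 0 ∧ H = dualKer α

/-- A hyperplane arrangement `(𝒜, T)`: `T` is an open convex cone, `𝒜` a set of linear
hyperplanes, each meeting `T`, which is locally finite in `T`. -/
structure IsHyperplaneArrangement (𝒜 : Set (Set V)) (T : Set V) : Prop where
  T_nonempty : T.Nonempty
  T_open : IsOpen T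
  T_convex : Convex ℝ T
  T_cone : ∀ x ∈ T, ∀ c : ℝ, 0 < c → c • x ∈ T
  hyperplanes : ∀ H ∈ 𝒜, IsLinearHyperplane H
  meets : ∀ H ∈ 𝒜, (H ∩ T).Nonempty
  locallyFinite : ∀ x ∈ T, ∃ U : Set V, IsOpen U ∧ x ∈ U ∧ U ⊆ T ∧
    {H ∈ 𝒜 | (H ∩ U).Nonempty}.Finite

/-- The chambers: connected components of `T \ ⋃ 𝒜`. -/
def chambersOf (𝒜 : Set (Set V)) (T : Set V) : Set (Set V) :=
  {K | ∃ x ∈ T \ ⋃₀ 𝒜, K = connectedComponentIn (T \ ⋃₀ 𝒜) x}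

/-- `H` is a wall of the chamber `K`: a hyperplane missing `K` such that
`H ∩ cl(K)` spans `H`. -/
def IsWall (K H : Set V) : Prop :=
  IsLinearHyperplane H ∧ H ∩ K = ∅ ∧
    (Submodule.span ℝ (H ∩ closure K) : Set V) = H

/-- An open simplicial cone: `⋂_{α ∈ B} α⁻¹(ℝ_{>0})` for a basis `B` of the dual space. -/
def IsOpenSimplicialCone (K : Set V) : Prop :=
  ∃ b : Module.Basis (Fin (Module.finrank ℝ V)) ℝ (Module.Dual ℝ V),
    K = {v | ∀ i, 0 < b i v}

/-- A Tits arrangement: a hyperplane arrangement all of whose chambers are open simplicial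
cones (simplicial) and such that every wall of every chamber belongs to `𝒜` (thin). -/
structure IsTitsArrangement (𝒜 : Set (Set V)) (T : Set V) extends
    IsHyperplaneArrangement 𝒜 T : Prop where
  simplicial : ∀ K ∈ chambersOf 𝒜 T, IsOpenSimplicialCone K
  thin : ∀ K ∈ chambersOf 𝒜 T, ∀ H : Set V, IsWall K H → H ∈ 𝒜

/-- `R` is a root system with associated arrangement `𝒜`: `0 ∉ R`, `R = -R` and
`𝒜 = {ker α | α ∈ R}`. -/
def IsAssociatedRootSystem (𝒜 : Set (Set V)) (R : Set (Module.Dual ℝ V)) : Prop :=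
  (0 : Module.Dual ℝ V) ∉ R ∧ (∀ α ∈ R, -α ∈ R) ∧ 𝒜 = {H | ∃ α ∈ R, H = dualKer α}

/-- The root basis `B^K` of a chamber `K`. -/
def rootBasisOf (R : Set (Module.Dual ℝ V)) (K : Set V) : Set (Module.Dual ℝ V) :=
  {α ∈ R | IsWall K (dualKer α) ∧ ∀ x ∈ K, 0 < α x}

/-- `β` is a non-negative real linear combination of elements of `B`. -/
def InNNRealSpan (B : Set (Module.Dual ℝ V)) (β : Module.Dual ℝ V) : Prop :=
  ∃ (s : Finset (Module.Dual ℝ V)) (c : Module.Dual ℝ V → ℝ),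
    ↑s ⊆ B ∧ (∀ α ∈ s, 0 ≤ c α) ∧ β = ∑ α ∈ s, c α • α

/-- `β` is a non-negative integral linear combination of elements of `B`. -/
def InNatSpan (B : Set (Module.Dual ℝ V)) (β : Module.Dual ℝ V) : Prop :=
  ∃ (s : Finset (Module.Dual ℝ V)) (c : Module.Dual ℝ V → ℕ),
    ↑s ⊆ B ∧ β = ∑ α ∈ s, (c α : ℝ) • α

/-- `β` is an integral linear combination of elements of `B`. -/
def InIntSpan (B : Set (Module.Dual ℝ V)) (β : Module.Dual ℝ V) : Prop :=
  ∃ (s : Finset (Module.Dual ℝ V)) (c : Module.Dual ℝ V → ℤ),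
    ↑s ⊆ B ∧ β = ∑ α ∈ s, (c α : ℝ) • α

/-- The crystallographic property: `R ⊆ ±∑_{α ∈ B^K} ℕ₀ α` for every chamber `K`. -/
def IsCrystallographic (𝒜 : Set (Set V)) (T : Set V) (R : Set (Module.Dual ℝ V)) : Prop :=
  ∀ K ∈ chambersOf 𝒜 T, ∀ β ∈ R,
    InNatSpan (rootBasisOf R K) β ∨ InNatSpan (rootBasisOf R K) (-β)

/-- The chamber complex `𝒮(𝒜,T)`. -/
def chamberComplexOf (𝒜 : Set (Set V)) (T : Set V) : Set (Set V) :=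
  {S | ∃ K ∈ chambersOf 𝒜 T, ∃ W : Set (Set V),
    (∀ H ∈ W, IsWall K H) ∧ S = closure K ∩ ⋂₀ W}

/-- `(𝒜,T)` is `k`-spherical: every simplex of the chamber complex of codimension `k`
meets `T`. -/
def IsKSpherical (𝒜 : Set (Set V)) (T : Set V) (k : ℕ) : Prop :=
  ∀ S ∈ chamberComplexOf 𝒜 T,
    Module.finrank ℝ (Submodule.span ℝ S) = Module.finrank ℝ V - k → (S ∩ T).Nonempty

/-- A reduced root system: `R ∩ ℝα = {±α}` for every `α ∈ R`. -/
def IsReducedRS (R : Set (Module.Dual ℝ V)) : Prop :=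
  ∀ α ∈ R, {β ∈ R | ∃ c : ℝ, β = c • α} = {α, -α}

/-- The hyperplane `H` separates `K` and `K'`. -/
def SeparatesH (H K K' : Set V) : Prop :=
  ∃ α : Module.Dual ℝ V, H = dualKer α ∧ (∀ x ∈ K, 0 < α x) ∧ ∀ x ∈ K', α x < 0

/-- The set `S(K,K')` of hyperplanes of `𝒜` separating `K` and `K'`. -/
def sepSet (𝒜 : Set (Set V)) (K K' : Set V) : Set (Set V) :=
  {H ∈ 𝒜 | SeparatesH H K K'}

/-- The reduction of a set of functionals: the shortest elements on each line. -/
def reducedOf (S : Set (Module.Dual ℝ V)) : Set (Module.Dual ℝ V) :=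
  {β ∈ S | ∀ γ ∈ S, ∀ c : ℝ, γ = c • β → 1 ≤ |c|}

end Arrangements

/-- The standard real vector space `ℝ^r`. -/
abbrev Vr (r : ℕ) : Type := Fin r → ℝ
section CartanGraphs

/-- A generalized Cartan matrix. -/
def IsGCM {I : Type*} (C : Matrix I I ℤ) : Prop :=
  (∀ i, C i i = 2) ∧ (∀ i j, i ≠ j → C i j ≤ 0) ∧
    ∀ i j, i ≠ j → C i j = 0 → C j i = 0

variable {I A : Type*} [Fintype I] [DecidableEq I]

/-- The reflection `σ_i` attached to a generalized Cartan matrix, acting on `ℤ^I`;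
on the standard basis it is `σ_i(α_j) = α_j - c_{ij} α_i`. -/
def gcmSigma (C : Matrix I I ℤ) (i : I) : (I → ℤ) → (I → ℤ) :=
  fun v k => v k - if k = i then ∑ j, C i j * v j else 0

/-- `WeylHom ρ C a b f` : `f` is a morphism from `a` to `b` of the Weyl groupoid of the
Cartan graph `(I, A, ρ, C)`, i.e. a composite of maps `σ_i^c ∈ Hom(c, ρ_i(c))`. -/
inductive WeylHom (ρ : I → A → A) (C : A → Matrix I I ℤ) :
    A → A → ((I → ℤ) → (I → ℤ)) → Prop
  | id (a : A) : WeylHom ρ C a a _root_.id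
  | comp {a b : A} {f : (I → ℤ) → (I → ℤ)} (i : I) :
      WeylHom ρ C a b f → WeylHom ρ C a (ρ i b) (gcmSigma (C b) i ∘ f)

/-- The axioms of a Cartan graph: `A` nonempty, all `C^a` generalized Cartan matrices,
(C1) each `ρ_i` an involution, (C2) `c^a_{ij} = c^{ρ_i(a)}_{ij}`. -/
def IsCartanGraph (ρ : I → A → A) (C : A → Matrix I I ℤ) : Prop :=
  Nonempty A ∧ (∀ a, IsGCM (C a)) ∧ (∀ i, Function.Involutive (ρ i)) ∧
    ∀ a i j, C a i j = C (ρ i a) i j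

/-- Connectedness: all Hom-sets of the Weyl groupoid are nonempty. -/
def CGConnected (ρ : I → A → A) (C : A → Matrix I I ℤ) : Prop :=
  ∀ a b : A, ∃ f, WeylHom ρ C a b f

/-- Simple connectedness: `Hom(a,a) = {id}` for every object `a`. -/
def CGSimplyConnected (ρ : I → A → A) (C : A → Matrix I I ℤ) : Prop :=
  ∀ (a : A) (f : (I → ℤ) → (I → ℤ)), WeylHom ρ C a a f → f = _root_.id

/-- The set of real roots at `a`: all images of standard basis vectors under morphisms
into `a`. -/
def realRootsAt (ρ : I → A → A) (C : A → Matrix I I ℤ) (a : A) : Set (I → ℤ) :=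
  {v | ∃ (b : A) (f : (I → ℤ) → (I → ℤ)) (j : I), WeylHom ρ C b a f ∧ v = f (Pi.single j 1)}

/-- A root system of type `𝒞 = (I, A, ρ, C)`: axioms (R1)-(R4). -/
def IsRootSystemOfType (ρ : I → A → A) (C : A → Matrix I I ℤ)
    (R : A → Set (I → ℤ)) : Prop :=
  (∀ a, R a = {v ∈ R a | ∀ i, 0 ≤ v i} ∪ (fun v => -v) '' {v ∈ R a | ∀ i, 0 ≤ v i}) ∧
  (∀ (a : A) (i : I), {v ∈ R a | ∃ n : ℤ, v = n • Pi.single i 1} =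
      {Pi.single i 1, -Pi.single i 1}) ∧
  (∀ (a : A) (i : I), gcmSigma (C a) i '' R a = R (ρ i a)) ∧
  ∀ (a : A) (i j : I), i ≠ j →
    {v ∈ R a | ∃ m n : ℕ, v = (m : ℤ) • Pi.single i 1 + (n : ℤ) • Pi.single j 1}.Finite →
    (ρ i ∘ ρ j)^[{v ∈ R a |
        ∃ m n : ℕ, v = (m : ℤ) • Pi.single i 1 + (n : ℤ) • Pi.single j 1}.ncard] a = a

end CartanGraphs

section Aux
open Module

variable {r : ℕ}

lemma dualKer_eq_ker (α : Module.Dual ℝ (Vr r)) :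
    dualKer α = (LinearMap.ker α : Submodule ℝ (Vr r)) := rfl

lemma dual_continuous (α : Module.Dual ℝ (Vr r)) : Continuous α :=
  α.continuous_of_finiteDimensional

/-- Two nonzero functionals with the same kernel are proportional. -/
lemma eq_smul_of_dualKer_eq {α β : Module.Dual ℝ (Vr r)} (hα : α ≠ 0)
    (h : dualKer α = dualKer β) : ∃ t : ℝ, t ≠ 0 ∧ β = t • α := by
  obtain ⟨x₀, hx₀⟩ : ∃ x₀, α x₀ ≠ 0 := by
    by_contra h'
    push_neg at h'
    exact hα (LinearMap.ext fun v => h' v)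
  refine ⟨β x₀ / α x₀, ?_, ?_⟩
  · intro h0
    have hb0 : β x₀ = 0 := by
      field_simp at h0
      simpa using h0
    have : x₀ ∈ dualKer β := hb0
    rw [← h] at this
    exact hx₀ this
  · apply LinearMap.ext
    intro v
    have hker : α (v - (α v / α x₀) • x₀) = 0 := by
      simp only [map_sub, map_smul, smul_eq_mul]
      field_simp
      ring
    have : (v - (α v / α x₀) • x₀) ∈ dualKer α := hker
    rw [h] at this
    have hβ : β v - (α v / α x₀) * β x₀ = 0 := by
      have h2 : β (v - (α v / α x₀) • x₀) = 0 := this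
      simpa [map_sub, map_smul, smul_eq_mul] using h2
    have : β v = (α v / α x₀) * β x₀ := by linarith
    rw [this]
    simp [smul_eq_mul]
    field_simp

lemma dualKer_smul {α : Module.Dual ℝ (Vr r)} {t : ℝ} (ht : t ≠ 0) :
    dualKer (t • α) = dualKer α := by
  ext v
  simp [dualKer, smul_eq_mul, ht]

lemma dualKer_neg (α : Module.Dual ℝ (Vr r)) : dualKer (-α) = dualKer α := by
  ext v; simp [dualKer]

/-- In an open set one can find a point where a nonzero functional does not vanish. -/
lemma exists_ne_zero_on_open {U : Set (Vr r)} (hU : IsOpen U) {v : Vr r} (hv : v ∈ U)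
    {α : Module.Dual ℝ (Vr r)} (hα : α ≠ 0) : ∃ u ∈ U, α u ≠ 0 := by
  by_contra h
  push_neg at h
  apply hα
  apply LinearMap.ext
  intro w
  have hcont : Continuous (fun t : ℝ => v + t • w) := by continuity
  have hOpen : IsOpen ((fun t : ℝ => v + t • w) ⁻¹' U) := hU.preimage hcont
  have h0 : (0 : ℝ) ∈ (fun t : ℝ => v + t • w) ⁻¹' U := by simp [hv]
  obtain ⟨ε, hε, hball⟩ := Metric.isOpen_iff.1 hOpen 0 h0
  have hmem : v + (ε/2) • w ∈ U := by
    apply hball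
    simp only [Metric.mem_ball, Real.dist_eq, sub_zero]
    rw [abs_of_nonneg (by positivity)]
    linarith
  have h1 : α (v + (ε/2) • w) = 0 := h _ hmem
  have h2 : α v = 0 := h _ hv
  have : (ε/2) * α w = 0 := by
    simpa [map_add, map_smul, h2, smul_eq_mul] using h1
  have hε2 : (ε/2) ≠ 0 := by positivity
  simpa [hε2] using (mul_eq_zero.1 this).resolve_left hε2

/-- In an open set one can find a point avoiding finitely many kernels. -/
lemma exists_avoid_finite {U : Set (Vr r)} (hU : IsOpen U) (hne : U.Nonempty)
    (s : Finset (Module.Dual ℝ (Vr r))) (hs : ∀ α ∈ s, α ≠ 0) :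
    ∃ v ∈ U, ∀ α ∈ s, α v ≠ 0 := by
  classical
  induction s using Finset.induction generalizing U with
  | empty => obtain ⟨v, hv⟩ := hne; exact ⟨v, hv, by simp⟩
  | @insert β s' hβ ih =>
    obtain ⟨v, hv⟩ := hne
    obtain ⟨u, hu, huβ⟩ := exists_ne_zero_on_open hU hv (hs β (Finset.mem_insert_self β s'))
    have hU' : IsOpen (U ∩ {w | β w ≠ 0}) := by
      apply hU.inter
      have : {w : Vr r | β w ≠ 0} = (⇑β) ⁻¹' ({0}ᶜ) := rfl
      rw [this]
      exact (isOpen_compl_singleton).preimage (dual_continuous β)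
    obtain ⟨w, hw, hws⟩ := ih hU' ⟨u, hu, huβ⟩ (fun α hα => hs α (Finset.mem_insert_of_mem hα))
    refine ⟨w, hw.1, ?_⟩
    intro α hα
    rcases Finset.mem_insert.1 hα with h | h
    · subst h; exact hw.2
    · exact hws α h

end Aux
section Aux2
open Module

variable {r : ℕ} {𝒜 : Set (Set (Vr r))} {T : Set (Vr r)}

lemma chamber_subset {K : Set (Vr r)} (hK : K ∈ chambersOf 𝒜 T) : K ⊆ T \ ⋃₀ 𝒜 := by
  obtain ⟨x, hx, rfl⟩ := hK
  exact connectedComponentIn_subset _ _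

lemma chamber_nonempty {K : Set (Vr r)} (hK : K ∈ chambersOf 𝒜 T) : K.Nonempty := by
  obtain ⟨x, hx, rfl⟩ := hK
  exact ⟨x, mem_connectedComponentIn hx⟩

lemma chamber_eq_of_mem {K K' : Set (Vr r)} (hK : K ∈ chambersOf 𝒜 T)
    (hK' : K' ∈ chambersOf 𝒜 T) {y : Vr r} (hy : y ∈ K) (hy' : y ∈ K') : K = K' := by
  obtain ⟨x, hx, rfl⟩ := hK
  obtain ⟨x', hx', rfl⟩ := hK'
  rw [connectedComponentIn_eq hy, connectedComponentIn_eq hy']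

lemma exists_chamber (hA : IsHyperplaneArrangement 𝒜 T) :
    ∃ K, K ∈ chambersOf 𝒜 T := by
  classical
  obtain ⟨x, hx⟩ := hA.T_nonempty
  obtain ⟨U, hUo, hxU, hUT, hUfin⟩ := hA.locallyFinite x hx
  -- choose functionals for hyperplanes in the finite set
  have hfun : ∀ H ∈ {H ∈ 𝒜 | (H ∩ U).Nonempty}, ∃ α : Module.Dual ℝ (Vr r), α ≠ 0 ∧ H = dualKer α :=
    fun H hH => hA.hyperplanes H hH.1
  choose! f hf0 hfK using hfun
  set F := hUfin.toFinset with hF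
  set s : Finset (Module.Dual ℝ (Vr r)) := F.image f with hs
  have hs0 : ∀ α ∈ s, α ≠ 0 := by
    intro α hα
    obtain ⟨H, hH, rfl⟩ := Finset.mem_image.1 hα
    exact hf0 H (hUfin.mem_toFinset.1 hH)
  obtain ⟨v, hvU, hv⟩ := exists_avoid_finite hUo ⟨x, hxU⟩ s hs0
  have hvT : v ∈ T \ ⋃₀ 𝒜 := by
    refine ⟨hUT hvU, ?_⟩
    rintro ⟨H, hH, hvH⟩
    by_cases hmem : (H ∩ U).Nonempty
    · have hHF : H ∈ {H ∈ 𝒜 | (H ∩ U).Nonempty} := ⟨hH, hmem⟩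
      have : f H v ≠ 0 := hv (f H) (Finset.mem_image_of_mem f (hUfin.mem_toFinset.2 hHF))
      apply this
      have := hfK H hHF
      rw [this] at hvH
      exact hvH
    · exact hmem ⟨v, hvH, hvU⟩
  exact ⟨_, v, hvT, rfl⟩

end Aux2
section Aux3
open Module

variable {r : ℕ} {𝒜 : Set (Set (Vr r))} {T : Set (Vr r)} {R : Set (Module.Dual ℝ (Vr r))}

lemma closure_simplicial_cone (b : Basis (Fin (Module.finrank ℝ (Vr r))) ℝ (Module.Dual ℝ (Vr r)))
    (eB : Basis (Fin (Module.finrank ℝ (Vr r))) ℝ (Vr r))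
    (heB : ∀ i j, b j (eB i) = if j = i then 1 else 0) :
    closure {v : Vr r | ∀ i, 0 < b i v} = {v : Vr r | ∀ i, 0 ≤ b i v} := by
  set K : Set (Vr r) := {v | ∀ i, 0 < b i v}
  set u : Vr r := ∑ i, eB i with hu
  have hbu : ∀ j, b j u = 1 := by
    intro j
    rw [hu, map_sum]
    rw [Finset.sum_eq_single j]
    · simp [heB]
    · intro i _ hij
      rw [heB]
      simp [Ne.symm hij]
    · simp
  have huK : u ∈ K := fun i => by rw [hbu]; norm_num
  apply subset_antisymm
  · apply closure_minimal
    · intro v hv i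
      exact le_of_lt (hv i)
    · have : {v : Vr r | ∀ i, 0 ≤ b i v} = ⋂ i, (b i) ⁻¹' (Set.Ici 0) := by
        ext v; simp [Set.mem_iInter]
      rw [this]
      exact isClosed_iInter fun i => (isClosed_Ici).preimage (dual_continuous _)
  · intro v hv
    have htend : Filter.Tendsto (fun k : ℕ => v + (1 / (k + 1) : ℝ) • u) Filter.atTop (nhds v) := by
      have h1 : Filter.Tendsto (fun k : ℕ => (1 / (k + 1) : ℝ)) Filter.atTop (nhds 0) :=
        tendsto_one_div_add_atTop_nhds_zero_nat
      have h2 : Filter.Tendsto (fun k : ℕ => (1 / (k + 1) : ℝ) • u) Filter.atTop (nhds ((0:ℝ) • u)) :=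
        h1.smul_const u
      rw [zero_smul] at h2
      simpa using (tendsto_const_nhds.add h2)
    apply mem_closure_of_tendsto htend
    filter_upwards with k
    intro i
    have : b i (v + (1 / (k + 1) : ℝ) • u) = b i v + (1 / (k + 1) : ℝ) := by
      rw [map_add, map_smul, hbu, smul_eq_mul, mul_one]
    rw [this]
    have : (0:ℝ) < 1 / (k + 1) := by positivity
    have h4 := hv i
    linarith

/-- Every root basis element of a chamber is a positive multiple of a defining functional,
and conversely the kernel of each defining functional comes from a root basis element. -/
lemma chamber_pack (hTits : IsTitsArrangement 𝒜 T) (hR : IsAssociatedRootSystem 𝒜 R)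
    {K : Set (Vr r)} (hK : K ∈ chambersOf 𝒜 T)
    {a : Fin r → Module.Dual ℝ (Vr r)} (ha : Function.Injective a)
    (hrange : Set.range a = rootBasisOf R K) :
    LinearIndependent ℝ a ∧ K = {v | ∀ k, 0 < a k v} := by
  classical
  set n := Module.finrank ℝ (Vr r) with hndef
  have hn : n = r := by rw [hndef]; simp [Module.finrank_pi]
  obtain ⟨b, hKb⟩ := hTits.simplicial K hK
  set eB : Basis (Fin n) ℝ (Vr r) := b.dualBasis.map (Module.evalEquiv ℝ (Vr r)).symm with heBdef
  have heB : ∀ i j, b j (eB i) = if j = i then 1 else 0 := by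
    intro i j
    have h1 : eB i = (Module.evalEquiv ℝ (Vr r)).symm (b.dualBasis i) := by
      rw [heBdef, Basis.map_apply]
    have h2 : Module.evalEquiv ℝ (Vr r) (eB i) = b.dualBasis i := by
      rw [h1, LinearEquiv.apply_symm_apply]
    have h3 : (b.dualBasis i) (b j) = b j (eB i) := by
      rw [← h2]
      rfl
    rw [← h3, Basis.dualBasis_apply_self]
  have hclK : closure K = {v : Vr r | ∀ i, 0 ≤ b i v} := by
    rw [hKb]; exact closure_simplicial_cone b eB heB
  have heBcl : ∀ i, eB i ∈ closure K := by
    intro i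
    rw [hclK]
    intro j
    rw [heB]
    split <;> norm_num
  -- classification of root basis elements
  have hclass : ∀ α ∈ rootBasisOf R K, ∃ (i : Fin n) (c : ℝ), 0 < c ∧ α = c • b i := by
    intro α hα
    obtain ⟨hαR, hwall, hpos⟩ := hα
    have hα0 : α ≠ 0 := fun h => hR.1 (h ▸ hαR)
    have hposcl : ∀ v ∈ closure K, 0 ≤ α v := by
      intro v hv
      have : closure K ⊆ {w | 0 ≤ α w} := by
        apply closure_minimal
        · intro w hw; exact le_of_lt (hpos w hw)
        · have : {w : Vr r | 0 ≤ α w} = α ⁻¹' (Set.Ici 0) := rfl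
          rw [this]; exact isClosed_Ici.preimage (dual_continuous α)
      exact this hv
    set c : Fin n → ℝ := fun i => α (eB i) with hc
    have hc0 : ∀ i, 0 ≤ c i := fun i => hposcl _ (heBcl i)
    have hαsum : α = ∑ i, c i • b i := by
      apply eB.ext
      intro j
      simp only [LinearMap.coe_sum, Finset.sum_apply, LinearMap.smul_apply, heB,
        smul_eq_mul, mul_ite, mul_one, mul_zero, Finset.sum_ite_eq, Finset.sum_ite_eq', Finset.mem_univ, if_true, hc]
    -- the support of c is a single index
    have hkerrank : Module.finrank ℝ (LinearMap.ker α) + 1 = n := by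
      have hsurj : Function.Surjective α := by
        obtain ⟨w, hw⟩ : ∃ w, α w ≠ 0 := by
          by_contra h'
          push_neg at h'
          exact hα0 (LinearMap.ext fun v => h' v)
        intro y
        exact ⟨(y / α w) • w, by simp [map_smul, smul_eq_mul]; field_simp⟩
      have := LinearMap.finrank_range_add_finrank_ker α
      rw [LinearMap.range_eq_top.2 hsurj, finrank_top, Module.finrank_self] at this
      omega
    obtain ⟨i₀, hi₀⟩ : ∃ i₀, c i₀ ≠ 0 := by
      by_contra h'
      push_neg at h'
      apply hα0
      rw [hαsum]
      apply Finset.sum_eq_zero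
      intro i _
      rw [h' i, zero_smul]
    have hsingle : ∀ i₁, c i₁ ≠ 0 → i₁ = i₀ := by
      intro i₁ hi₁
      by_contra hne
      -- dimension contradiction
      set W : Submodule ℝ (Vr r) := LinearMap.ker (b i₀) ⊓ LinearMap.ker (b i₁) with hW
      have hWrank : Module.finrank ℝ W + 2 = n := by
        set φ : Vr r →ₗ[ℝ] ℝ × ℝ := (b i₀).prod (b i₁) with hφ
        have hkerφ : LinearMap.ker φ = W := LinearMap.ker_prod _ _
        have hsurj : Function.Surjective φ := by
          intro p
          refine ⟨p.1 • eB i₀ + p.2 • eB i₁, ?_⟩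
          have e00 : b i₀ (eB i₀) = 1 := by rw [heB]; simp
          have e01 : b i₀ (eB i₁) = 0 := by rw [heB]; simp [Ne.symm hne]
          have e10 : b i₁ (eB i₀) = 0 := by rw [heB]; simp [hne]
          have e11 : b i₁ (eB i₁) = 1 := by rw [heB]; simp
          have : φ (p.1 • eB i₀ + p.2 • eB i₁)
              = (p.1 * b i₀ (eB i₀) + p.2 * b i₀ (eB i₁),
                 p.1 * b i₁ (eB i₀) + p.2 * b i₁ (eB i₁)) := by
            simp [hφ, LinearMap.prod_apply, map_add, map_smul, smul_eq_mul]
          rw [this, e00, e01, e10, e11]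
          simp
        have h2 := LinearMap.finrank_range_add_finrank_ker φ
        rw [LinearMap.range_eq_top.2 hsurj, finrank_top, hkerφ] at h2
        have h3 : Module.finrank ℝ (ℝ × ℝ) = 2 := by
          simp [Module.finrank_prod]
        omega
      have hsub : LinearMap.ker α ≤ W := by
        have hspan : (Submodule.span ℝ (dualKer α ∩ closure K) : Set (Vr r)) = dualKer α :=
          hwall.2.2
        have hsp2 : Submodule.span ℝ (dualKer α ∩ closure K) ≤ W := by
          apply Submodule.span_le.2
          rintro v ⟨hv1, hv2⟩
          have hterms : ∀ i ∈ Finset.univ, 0 ≤ c i * b i v := by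
            intro i _
            have h5 : 0 ≤ b i v := by
              rw [hclK] at hv2
              exact hv2 i
            exact mul_nonneg (hc0 i) h5
          have hsum0 : ∑ i, c i * b i v = 0 := by
            have : α v = 0 := hv1
            rw [hαsum] at this
            simpa [LinearMap.coe_sum, Finset.sum_apply, smul_eq_mul] using this
          have hzero : ∀ i ∈ Finset.univ, c i * b i v = 0 :=
            (Finset.sum_eq_zero_iff_of_nonneg hterms).1 hsum0
          constructor
          · have := hzero i₀ (Finset.mem_univ _)
            rcases mul_eq_zero.1 this with h | h
            · exact absurd h hi₀
            · exact h
          · have := hzero i₁ (Finset.mem_univ _)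
            rcases mul_eq_zero.1 this with h | h
            · exact absurd h hi₁
            · exact h
        intro v hv
        have hv' : v ∈ dualKer α := hv
        rw [← hspan] at hv'
        exact hsp2 hv'
      have hle := Submodule.finrank_mono hsub
      omega
    refine ⟨i₀, c i₀, lt_of_le_of_ne (hc0 i₀) (Ne.symm hi₀), ?_⟩
    rw [hαsum]
    rw [Finset.sum_eq_single i₀]
    · intro i _ hii
      rw [(by by_contra h; exact hii (hsingle i h) : c i = 0), zero_smul]
    · simp
  -- every defining hyperplane comes from the root basis
  have hsurjwall : ∀ i₀ : Fin n, ∃ (k : Fin r) (c : ℝ), 0 < c ∧ a k = c • b i₀ := by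
    intro i₀
    have hwall : IsWall K (dualKer (b i₀)) := by
      refine ⟨⟨b i₀, b.ne_zero i₀, rfl⟩, ?_, ?_⟩
      · apply Set.eq_empty_iff_forall_notMem.2
        rintro v ⟨hv1, hv2⟩
        rw [hKb] at hv2
        exact absurd hv1 (ne_of_gt (hv2 i₀))
      · -- span of the panel is the full hyperplane
        have hle : Submodule.span ℝ (dualKer (b i₀) ∩ closure K) ≤ LinearMap.ker (b i₀) := by
          apply Submodule.span_le.2
          rintro v ⟨hv1, _⟩
          exact hv1
        have hge : Module.finrank ℝ (LinearMap.ker (b i₀)) ≤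
            Module.finrank ℝ (Submodule.span ℝ (dualKer (b i₀) ∩ closure K)) := by
          set g : {j : Fin n // j ≠ i₀} → Vr r := fun j => eB j.1 with hg
          have hgli : LinearIndependent ℝ g :=
            eB.linearIndependent.comp Subtype.val Subtype.val_injective
          have hgspan : Submodule.span ℝ (Set.range g) ≤
              Submodule.span ℝ (dualKer (b i₀) ∩ closure K) := by
            apply Submodule.span_mono
            rintro v ⟨j, rfl⟩
            refine ⟨?_, heBcl j.1⟩
            have : b i₀ (eB j.1) = 0 := by
              rw [heB]
              simp [Ne.symm j.2]
            exact this
          have hcard : Fintype.card {j : Fin n // j ≠ i₀} = n - 1 := by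
            simp [Fintype.card_subtype_compl]
          have h1 : Module.finrank ℝ (Submodule.span ℝ (Set.range g)) = n - 1 := by
            rw [finrank_span_eq_card hgli, hcard]
          have hker : Module.finrank ℝ (LinearMap.ker (b i₀)) + 1 = n := by
            have hsurj : Function.Surjective (b i₀) := by
              intro y
              refine ⟨y • eB i₀, ?_⟩
              have : b i₀ (eB i₀) = 1 := by rw [heB]; simp
              simp [map_smul, this, smul_eq_mul]
            have := LinearMap.finrank_range_add_finrank_ker (b i₀)
            rw [LinearMap.range_eq_top.2 hsurj, finrank_top, Module.finrank_self] at this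
            omega
          calc Module.finrank ℝ (LinearMap.ker (b i₀)) = n - 1 := by omega
          _ = Module.finrank ℝ (Submodule.span ℝ (Set.range g)) := h1.symm
          _ ≤ _ := Submodule.finrank_mono hgspan
        have := Submodule.eq_of_le_of_finrank_le hle hge
        rw [this]
        rfl
    have hA : dualKer (b i₀) ∈ 𝒜 := hTits.thin K hK _ hwall
    have : dualKer (b i₀) ∈ {H | ∃ γ ∈ R, H = dualKer γ} := by
      rw [← hR.2.2]; exact hA
    obtain ⟨γ, hγR, hγ⟩ := this
    have hγ0 : γ ≠ 0 := fun h => hR.1 (h ▸ hγR)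
    obtain ⟨t, ht0, hts⟩ := eq_smul_of_dualKer_eq (b.ne_zero i₀) hγ
    rcases lt_or_gt_of_ne ht0 with htneg | htpos
    · -- use -γ
      have hmγR : -γ ∈ R := hR.2.1 γ hγR
      have hin : -γ ∈ rootBasisOf R K := by
        refine ⟨hmγR, ?_, ?_⟩
        · rw [dualKer_neg, ← hγ]
          exact hwall
        · intro x hx
          rw [hts]
          have : (0:ℝ) < (-t) * (b i₀ x) := by
            have hbx : 0 < b i₀ x := by rw [hKb] at hx; exact hx i₀
            have : 0 < -t := by linarith
            positivity
          simpa [smul_eq_mul] using this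
      rw [← hrange] at hin
      obtain ⟨k, hk⟩ := hin
      refine ⟨k, -t, by linarith, ?_⟩
      rw [hk, hts]
      module
    · have hin : γ ∈ rootBasisOf R K := by
        refine ⟨hγR, ?_, ?_⟩
        · rw [← hγ]; exact hwall
        · intro x hx
          rw [hts]
          have hbx : 0 < b i₀ x := by rw [hKb] at hx; exact hx i₀
          have : (0:ℝ) < t * (b i₀ x) := by positivity
          simpa [smul_eq_mul] using this
      rw [← hrange] at hin
      obtain ⟨k, hk⟩ := hin
      exact ⟨k, t, htpos, by rw [hk, hts]⟩
  -- choose the index map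
  have hak : ∀ k : Fin r, ∃ (i : Fin n) (c : ℝ), 0 < c ∧ a k = c • b i := by
    intro k
    apply hclass
    rw [← hrange]
    exact ⟨k, rfl⟩
  choose m c hcpos hrep using hak
  have hmsurj : Function.Surjective m := by
    intro i₀
    obtain ⟨k, c', hc', hk⟩ := hsurjwall i₀
    refine ⟨k, ?_⟩
    have : c k • b (m k) = c' • b i₀ := by rw [← hrep, hk]
    have happ : c k * (if m k = i₀ then (1:ℝ) else 0) = c' := by
      have h2 := congrArg (fun φ : Module.Dual ℝ (Vr r) => φ (eB i₀)) this
      simp only [LinearMap.smul_apply, smul_eq_mul] at h2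
      rw [heB, heB] at h2
      simpa using h2
    by_contra hne
    rw [if_neg hne, mul_zero] at happ
    exact (ne_of_gt hc') happ.symm
  have hmbij : Function.Bijective m := by
    rw [Fintype.bijective_iff_surjective_and_card]
    exact ⟨hmsurj, by rw [Fintype.card_fin, Fintype.card_fin, hn]⟩
  constructor
  · -- linear independence
    have hli : LinearIndependent ℝ (fun k => b (m k)) :=
      b.linearIndependent.comp m hmbij.1
    have := hli.units_smul (fun k => Units.mk0 (c k) (ne_of_gt (hcpos k)))
    convert this using 1
    funext k
    rw [hrep k]
    rfl
  · -- positivity description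
    rw [hKb]
    ext v
    constructor
    · intro hv k
      rw [hrep k, LinearMap.smul_apply, smul_eq_mul]
      exact mul_pos (hcpos k) (hv (m k))
    · intro hv i
      obtain ⟨k, rfl⟩ := hmsurj i
      have := hv k
      rw [hrep k, LinearMap.smul_apply, smul_eq_mul] at this
      nlinarith [hcpos k]

end Aux3
section Aux4
open Module

variable {r : ℕ} {𝒜 : Set (Set (Vr r))} {T : Set (Vr r)}

lemma weylHom_trans {I A : Type*} [Fintype I] [DecidableEq I] {ρ : I → A → A}
    {C : A → Matrix I I ℤ} {a b c : A} {f g : (I → ℤ) → (I → ℤ)}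
    (h1 : WeylHom ρ C a b f) (h2 : WeylHom ρ C b c g) : WeylHom ρ C a c (g ∘ f) := by
  induction h2 with
  | id => simpa using h1
  | comp i h ih => exact WeylHom.comp i ih

lemma sep_subset_finite (hA : IsHyperplaneArrangement 𝒜 T) {x y : Vr r}
    (hx : x ∈ T) (hy : y ∈ T) :
    Set.Finite {H | H ∈ 𝒜 ∧ ∃ β : Module.Dual ℝ (Vr r),
      H = dualKer β ∧ 0 < β x ∧ β y < 0} := by
  classical
  set seg := segment ℝ x y with hsegdef
  have hsegT : seg ⊆ T := hA.T_convex.segment_subset hx hy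
  have hcomp : IsCompact seg := by
    rw [hsegdef, segment_eq_image ℝ x y]
    apply IsCompact.image isCompact_Icc
    fun_prop
  have hloc : ∀ z ∈ seg, ∃ U : Set (Vr r), IsOpen U ∧ z ∈ U ∧ U ⊆ T ∧
      {H ∈ 𝒜 | (H ∩ U).Nonempty}.Finite := fun z hz => hA.locallyFinite z (hsegT hz)
  choose! U hUo hzU hUT hUfin using hloc
  have hcover : seg ⊆ ⋃ z ∈ seg, U z := fun z hz =>
    Set.mem_biUnion hz (hzU z hz)
  obtain ⟨t, htseg, htfin, hcov⟩ :=
    hcomp.elim_finite_subcover_image (fun z hz => hUo z hz) hcover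
  apply Set.Finite.subset (htfin.biUnion (fun z hz => hUfin z (htseg hz)))
  rintro H ⟨hH𝒜, β, rfl, hβx, hβy⟩
  have hf : Continuous (fun θ : ℝ => β ((1 - θ) • x + θ • y)) := by
    have := dual_continuous β
    fun_prop
  have h01 : (0:ℝ) ≤ 1 := by norm_num
  have hiv := intermediate_value_Icc' h01 hf.continuousOn
  have h0mem : (0:ℝ) ∈ Set.Icc (β ((1-(1:ℝ)) • x + (1:ℝ) • y)) (β ((1-(0:ℝ)) • x + (0:ℝ) • y)) := by
    simp only [sub_self, sub_zero, zero_smul, one_smul, zero_add, add_zero]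
    exact ⟨le_of_lt hβy, le_of_lt hβx⟩
  obtain ⟨θ, hθ, hθ0⟩ := hiv h0mem
  set z₀ := (1 - θ) • x + θ • y with hz₀
  have hz₀seg : z₀ ∈ seg := by
    rw [hsegdef, segment_eq_image ℝ x y]
    exact ⟨θ, hθ, rfl⟩
  obtain ⟨z, hz, hz₀U⟩ := Set.mem_iUnion₂.1 (hcov hz₀seg)
  apply Set.mem_biUnion hz
  exact ⟨hH𝒜, z₀, hθ0, hz₀U⟩

end Aux4

set_option maxHeartbeats 1000000


/-- given a crystallographic Tits arrangement `(𝒜,T)` w.r.t. `R` with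
compatibly indexed root bases `ind K` of all chambers, the maps `ρ_i` sending a chamber to
its `i`-adjacent chamber and the Cartan matrices `C^K` at the chambers form a connected
Cartan graph `𝒞(I, 𝒦, (ρ_i), (C^K))`. -/
theorem statement_3 {r : ℕ} (𝒜 : Set (Set (Vr r))) (T : Set (Vr r))
    (R : Set (Module.Dual ℝ (Vr r)))
    (hTits : IsTitsArrangement 𝒜 T) (hR : IsAssociatedRootSystem 𝒜 R)
    (hcrys : IsCrystallographic 𝒜 T R)
    (ind : {K : Set (Vr r) // K ∈ chambersOf 𝒜 T} → Fin r → Module.Dual ℝ (Vr r))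
    (hind : ∀ K, Function.Injective (ind K) ∧ Set.range (ind K) = rootBasisOf R K.1)
    (ρ : Fin r → {K : Set (Vr r) // K ∈ chambersOf 𝒜 T} →
      {K : Set (Vr r) // K ∈ chambersOf 𝒜 T})
    (hρ : ∀ i K, ρ i K ≠ K ∧
      (Submodule.span ℝ (closure K.1 ∩ closure (ρ i K).1) : Set (Vr r)) =
        dualKer (ind K i))
    (hcompat : ∀ i K, ind (ρ i K) i = -(ind K i) ∧
      ∀ j, ind (ρ i K) j ∈ Submodule.span ℝ {ind K j, ind K i})
    (C : {K : Set (Vr r) // K ∈ chambersOf 𝒜 T} → Matrix (Fin r) (Fin r) ℤ)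
    (hC : ∀ K i j, ind (ρ i K) j = ind K j - C K i j • ind K i) :
    IsCartanGraph ρ C ∧ CGConnected ρ C := by
  classical
  -- chamber packs
  have hpack : ∀ K : {K : Set (Vr r) // K ∈ chambersOf 𝒜 T}, LinearIndependent ℝ (ind K) ∧ K.1 = {v | ∀ k, 0 < ind K k v} :=
    fun K => chamber_pack hTits hR K.2 (hind K).1 (hind K).2
  have hli : ∀ K : {K : Set (Vr r) // K ∈ chambersOf 𝒜 T}, LinearIndependent ℝ (ind K) := fun K => (hpack K).1
  have hKpos : ∀ K : {K : Set (Vr r) // K ∈ chambersOf 𝒜 T}, K.1 = {v | ∀ k, 0 < ind K k v} := fun K => (hpack K).2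
  -- bases
  have hBex : ∀ K : {K : Set (Vr r) // K ∈ chambersOf 𝒜 T}, ∃ B : Module.Basis (Fin r) ℝ (Module.Dual ℝ (Vr r)), ∀ k, B k = ind K k := by
    intro K
    have hspan : Submodule.span ℝ (Set.range (ind K)) = ⊤ := by
      apply Submodule.eq_top_of_finrank_eq
      rw [finrank_span_eq_card (hli K), Fintype.card_fin, Subspace.dual_finrank_eq]
      simp [Module.finrank_pi]
    exact ⟨Module.Basis.mk (hli K) (by rw [hspan]), fun k => Module.Basis.mk_apply _ _ k⟩
  choose B hB using hBex
  -- basic facts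
  have hroot : ∀ (K : {K : Set (Vr r) // K ∈ chambersOf 𝒜 T}) (k), ind K k ∈ rootBasisOf R K.1 := fun K k => by
    rw [← (hind K).2]; exact ⟨k, rfl⟩
  have hindR : ∀ (K : {K : Set (Vr r) // K ∈ chambersOf 𝒜 T}) (k), ind K k ∈ R := fun K k => (hroot K k).1
  have hind0 : ∀ (K : {K : Set (Vr r) // K ∈ chambersOf 𝒜 T}) (k), ind K k ≠ 0 := fun K k h => hR.1 (h ▸ hindR K k)
  have hKne : ∀ K : {K : Set (Vr r) // K ∈ chambersOf 𝒜 T}, K.1.Nonempty := fun K => chamber_nonempty K.2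
  have hRne0 : ∀ β ∈ R, β ≠ (0 : Module.Dual ℝ (Vr r)) := fun β hβ h => hR.1 (h ▸ hβ)
  -- sign coherence from the crystallographic property
  have hcoh : ∀ (K : {K : Set (Vr r) // K ∈ chambersOf 𝒜 T}) (β), β ∈ R →
      (∀ a, 0 ≤ (B K).repr β a) ∨ (∀ a, (B K).repr β a ≤ 0) := by
    intro K β hβ
    have hnat : ∀ γ, InNatSpan (rootBasisOf R K.1) γ → ∀ a, 0 ≤ (B K).repr γ a := by
      rintro γ ⟨s, cc, hs, hsum⟩ a
      rw [hsum, map_sum, Finsupp.finset_sum_apply]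
      apply Finset.sum_nonneg
      intro α hαs
      have hαr : α ∈ Set.range (ind K) := by rw [(hind K).2]; exact hs hαs
      obtain ⟨k, hk⟩ := hαr
      have hrepr : (B K).repr α = Finsupp.single k 1 := by
        rw [← hk, ← hB K k]; exact (B K).repr_self k
      rw [map_smul, Finsupp.smul_apply, hrepr, Finsupp.single_apply]
      by_cases h : k = a <;> simp [h] <;> positivity
    rcases hcrys K.1 K.2 β hβ with h | h
    · exact Or.inl (hnat β h)
    · refine Or.inr fun a => ?_
      have := hnat _ h a
      rw [map_neg, Finsupp.neg_apply] at this
      linarith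
  -- positivity on a chamber from coordinates
  have hval : ∀ (K : {K : Set (Vr r) // K ∈ chambersOf 𝒜 T}) (β : Module.Dual ℝ (Vr r)) (x : Vr r),
      β x = ∑ a, (B K).repr β a * ind K a x := by
    intro K β x
    conv_lhs => rw [← (B K).sum_repr β]
    simp [LinearMap.coe_sum, Finset.sum_apply, LinearMap.smul_apply, smul_eq_mul, hB]
  have hposof : ∀ (K : {K : Set (Vr r) // K ∈ chambersOf 𝒜 T}) (β : Module.Dual ℝ (Vr r)), (∀ a, 0 ≤ (B K).repr β a) →
      β ≠ 0 → ∀ x ∈ K.1, 0 < β x := by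
    intro K β hnn hβ0 x hx
    have hx' : ∀ k, 0 < ind K k x := by
      have := hx; rw [hKpos K] at this; exact this
    rw [hval K β x]
    apply Finset.sum_pos'
    · intro a _
      exact mul_nonneg (hnn a) (le_of_lt (hx' a))
    · obtain ⟨a, ha⟩ : ∃ a, (B K).repr β a ≠ 0 := by
        by_contra h'
        push_neg at h'
        apply hβ0
        apply (B K).repr.injective
        ext a
        simp [h']
      exact ⟨a, Finset.mem_univ a, mul_pos (lt_of_le_of_ne (hnn a) (Ne.symm ha)) (hx' a)⟩
  have hnnof : ∀ (K : {K : Set (Vr r) // K ∈ chambersOf 𝒜 T}) (β), β ∈ R → (∀ x ∈ K.1, 0 < β x) →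
      ∀ a, 0 ≤ (B K).repr β a := by
    intro K β hβR hpos
    rcases hcoh K β hβR with h | h
    · exact h
    · exfalso
      obtain ⟨u, hu⟩ := hKne K
      have hu' : ∀ k, 0 < ind K k u := by
        have := hu; rw [hKpos K] at this; exact this
      have h1 : β u ≤ 0 := by
        rw [hval K β u]
        apply Finset.sum_nonpos
        intro a _
        exact mul_nonpos_of_nonpos_of_nonneg (h a) (le_of_lt (hu' a))
      exact absurd (hpos u hu) (not_lt.2 h1)
  -- coordinate computations
  have hcoord : ∀ (K : {K : Set (Vr r) // K ∈ chambersOf 𝒜 T}) (z : ℤ) (p q a : Fin r),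
      (B K).repr (ind K p - z • ind K q) a
        = (if p = a then 1 else 0) - (z : ℝ) * (if q = a then 1 else 0) := by
    intro K z p q a
    rw [← hB K p, ← hB K q, map_sub, map_zsmul, Finsupp.sub_apply, Finsupp.smul_apply,
      (B K).repr_self, (B K).repr_self, Finsupp.single_apply, Finsupp.single_apply]
    simp [zsmul_eq_mul]
  -- diagonal entries are 2
  have hdiag : ∀ (K : {K : Set (Vr r) // K ∈ chambersOf 𝒜 T}) (i), C K i i = 2 := by
    intro K i
    have h := hC K i i
    rw [(hcompat i K).1] at h
    obtain ⟨u, hu⟩ := hKne K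
    have hu' : 0 < ind K i u := by
      have := hu; rw [hKpos K] at this; exact this i
    have h2 := congrArg (fun φ : Module.Dual ℝ (Vr r) => φ u) h
    simp only [LinearMap.neg_apply, LinearMap.sub_apply, LinearMap.smul_apply,
      zsmul_eq_mul] at h2
    have h3 : ((C K i i : ℝ)) * ind K i u = 2 * ind K i u := by push_cast at h2 ⊢; linarith
    have h4 : (C K i i : ℝ) = 2 := by
      have := mul_right_cancel₀ (ne_of_gt hu') h3
      exact this
    exact_mod_cast h4
  -- off-diagonal entries are nonpositive
  have hoffdiag : ∀ (K : {K : Set (Vr r) // K ∈ chambersOf 𝒜 T}) (i j), i ≠ j → C K i j ≤ 0 := by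
    intro K i j hij
    set β := ind (ρ i K) j with hβ
    have hβR : β ∈ R := hindR (ρ i K) j
    have hrepr : ∀ a, (B K).repr β a
        = (if j = a then 1 else 0) - (C K i j : ℝ) * (if i = a then 1 else 0) := by
      intro a
      rw [hβ, hC K i j]
      exact hcoord K (C K i j) j i a
    have hreprj : (B K).repr β j = 1 := by
      rw [hrepr j, if_pos rfl, if_neg hij]
      ring
    rcases hcoh K β hβR with h | h
    · have := h i
      rw [hrepr i, if_neg (Ne.symm hij), if_pos rfl] at this
      have : (C K i j : ℝ) ≤ 0 := by linarith
      exact_mod_cast this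
    · exfalso
      have := h j
      rw [hreprj] at this
      linarith
  -- zero symmetry
  have hzerosym : ∀ (K : {K : Set (Vr r) // K ∈ chambersOf 𝒜 T}) (i j), i ≠ j →
      C K i j = 0 → C K j i = 0 := by
    intro K i j hij h0
    set L := ρ i K with hL
    set γ := ind (ρ j K) i with hγdef
    have hγR : γ ∈ R := hindR (ρ j K) i
    have hKiL : ind K i = -(ind L i) := by rw [(hcompat i K).1, neg_neg]
    have hKjL : ind K j = ind L j := by
      have := hC K i j
      rw [h0] at this
      simp only [zero_smul, sub_zero] at this
      rw [this]
    have hγeq : γ = -(ind L i) - C K j i • ind L j := by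
      rw [hγdef, hC K j i, hKiL, hKjL]
    have hrepr : ∀ a, (B L).repr γ a
        = -(if i = a then 1 else 0) - (C K j i : ℝ) * (if j = a then 1 else 0) := by
      intro a
      rw [hγeq, ← hB L i, ← hB L j, map_sub, map_neg, map_zsmul, Finsupp.sub_apply,
        Finsupp.neg_apply, Finsupp.smul_apply, (B L).repr_self, (B L).repr_self,
        Finsupp.single_apply, Finsupp.single_apply]
      simp [zsmul_eq_mul]
    rcases hcoh L γ hγR with h | h
    · exfalso
      have := h i
      rw [hrepr i, if_pos rfl, if_neg (Ne.symm hij)] at this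
      linarith
    · have := h j
      rw [hrepr j, if_neg hij, if_pos rfl] at this
      have h1 : (0:ℝ) ≤ (C K j i : ℝ) := by linarith
      have h2 : (0:ℤ) ≤ C K j i := by exact_mod_cast h1
      have h3 := hoffdiag K j i (Ne.symm hij)
      omega
  -- involutivity and (C2)
  have hinvd : ∀ (i) (K : {K : Set (Vr r) // K ∈ chambersOf 𝒜 T}) (j),
      C (ρ i K) i j = C K i j ∧ ind (ρ i (ρ i K)) j = ind K j := by
    intro i K j
    set L := ρ i K with hLdef
    set M := ρ i L with hMdef
    have hMi : ind M i = ind K i := by rw [hMdef, (hcompat i L).1, (hcompat i K).1, neg_neg]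
    by_cases hj : j = i
    · subst hj
      exact ⟨by rw [hdiag L j, hdiag K j], hMi⟩
    · set d : ℤ := C L i j - C K i j with hd
      have hMj : ind M j = ind K j + d • ind K i := by
        rw [hMdef, hC L i j, hC K i j, (hcompat i K).1, hd]
        rw [smul_neg, sub_smul]
        abel
      have hγR : ind M j ∈ R := hindR M j
      have hreprK : ∀ a, (B K).repr (ind M j) a
          = (if j = a then 1 else 0) + (d : ℝ) * (if i = a then 1 else 0) := by
        intro a
        rw [hMj, ← hB K j, ← hB K i, map_add, map_zsmul, Finsupp.add_apply,
          Finsupp.smul_apply, (B K).repr_self, (B K).repr_self,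
          Finsupp.single_apply, Finsupp.single_apply]
        simp [zsmul_eq_mul]
      have hdnn : (0:ℝ) ≤ (d:ℝ) := by
        rcases hcoh K (ind M j) hγR with h | h
        · have := h i
          rw [hreprK i, if_neg hj, if_pos rfl] at this
          linarith
        · exfalso
          have := h j
          rw [hreprK j, if_pos rfl, if_neg (fun hh => hj hh.symm)] at this
          linarith
      have hKj2 : ind K j = ind M j - d • ind M i := by
        rw [hMj, hMi]; abel
      have hreprM : ∀ a, (B M).repr (ind K j) a
          = (if j = a then 1 else 0) - (d : ℝ) * (if i = a then 1 else 0) := by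
        intro a
        rw [hKj2, ← hB M j, ← hB M i, map_sub, map_zsmul, Finsupp.sub_apply,
          Finsupp.smul_apply, (B M).repr_self, (B M).repr_self,
          Finsupp.single_apply, Finsupp.single_apply]
        simp [zsmul_eq_mul]
      have hdnp : (d:ℝ) ≤ 0 := by
        rcases hcoh M (ind K j) (hindR K j) with h | h
        · have := h i
          rw [hreprM i, if_neg hj, if_pos rfl] at this
          linarith
        · exfalso
          have := h j
          rw [hreprM j, if_pos rfl, if_neg (fun hh => hj hh.symm)] at this
          linarith
      have hd0 : d = 0 := by
        have : (d:ℝ) = 0 := le_antisymm hdnp hdnn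
        exact_mod_cast this
      constructor
      · have : C L i j - C K i j = 0 := hd ▸ hd0
        omega
      · rw [hMj, hd0]
        simp
  have hinv : ∀ i, Function.Involutive (ρ i) := by
    intro i K
    apply Subtype.ext
    have h1 := hKpos (ρ i (ρ i K))
    have h2 := hKpos K
    rw [h1, h2]
    ext v
    simp only [Set.mem_setOf_eq]
    constructor
    · intro h k
      have := h k
      rwa [(hinvd i K k).2] at this
    · intro h k
      rw [(hinvd i K k).2]
      exact h k
  have hC2 : ∀ (K : {K : Set (Vr r) // K ∈ chambersOf 𝒜 T}) (i j), C K i j = C (ρ i K) i j :=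
    fun K i j => ((hinvd i K j).1).symm
  -- the transfer lemma: positivity is preserved when crossing a different wall
  have htrans : ∀ (K : {K : Set (Vr r) // K ∈ chambersOf 𝒜 T}) (k) (β), β ∈ R →
      (∀ x ∈ K.1, 0 < β x) → dualKer β ≠ dualKer (ind K k) →
      ∀ x ∈ (ρ k K).1, 0 < β x := by
    intro K k β hβR hpos hker
    set L := ρ k K with hLdef
    have hw : ∀ a, 0 ≤ (B K).repr β a := hnnof K β hβR hpos
    have hβ0 : β ≠ 0 := hRne0 β hβR
    obtain ⟨a₀, ha₀k, ha₀⟩ : ∃ a₀, a₀ ≠ k ∧ 0 < (B K).repr β a₀ := by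
      by_contra h'
      push_neg at h'
      have hz : ∀ a, a ≠ k → (B K).repr β a = 0 := fun a ha =>
        le_antisymm (h' a ha) (hw a)
      have hβeq : β = (B K).repr β k • ind K k := by
        conv_lhs => rw [← (B K).sum_repr β]
        rw [Finset.sum_eq_single k]
        · rw [hB]
        · intro a _ hak
          rw [hz a hak, zero_smul]
        · simp
      have hk0 : (B K).repr β k ≠ 0 := by
        intro h0
        apply hβ0
        rw [hβeq, h0, zero_smul]
      exact hker (hβeq ▸ dualKer_smul hk0)
    have hindKa : ∀ a, ind K a = ind L a - C K k a • ind L k := by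
      intro a
      have h2 : ind K k = -(ind L k) := by rw [hLdef, (hcompat k K).1, neg_neg]
      rw [hLdef, hC K k a, h2, smul_neg]
      abel
    have hrL : (B L).repr β a₀ = (B K).repr β a₀ := by
      have hstep1 : (B L).repr β a₀ = ∑ a, (B K).repr β a * ((B L).repr (ind K a) a₀) := by
        conv_lhs => rw [← (B K).sum_repr β]
        rw [map_sum, Finsupp.finset_sum_apply]
        congr 1
        funext a
        rw [hB, map_smul, Finsupp.smul_apply, smul_eq_mul]
      have hstep2 : ∀ a, (B L).repr (ind K a) a₀ = if a = a₀ then 1 else 0 := by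
        intro a
        rw [hindKa a, ← hB L a, ← hB L k, map_sub, map_zsmul, Finsupp.sub_apply,
          Finsupp.smul_apply, (B L).repr_self, (B L).repr_self,
          Finsupp.single_apply, Finsupp.single_apply, if_neg (Ne.symm ha₀k)]
        simp [zsmul_eq_mul]
      rw [hstep1]
      simp only [hstep2, mul_ite, mul_one, mul_zero]
      rw [Finset.sum_ite_eq' Finset.univ a₀ (fun a => (B K).repr β a)]
      simp
    rcases hcoh L β hβR with h | h
    · exact hposof L β h hβ0
    · exfalso
      have := h a₀
      rw [hrL] at this
      linarith
  -- walls are hyperplanes of the arrangement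
  have hker𝒜 : ∀ (K : {K : Set (Vr r) // K ∈ chambersOf 𝒜 T}) (k),
      dualKer (ind K k) ∈ 𝒜 := fun K k => hTits.thin K.1 K.2 _ (hroot K k).2.1
  -- assemble
  constructor
  · refine ⟨?_, ?_, hinv, ?_⟩
    · obtain ⟨K, hK⟩ := exists_chamber hTits.toIsHyperplaneArrangement
      exact ⟨⟨K, hK⟩⟩
    · intro K
      exact ⟨hdiag K, fun i j hij => hoffdiag K i j hij, fun i j hij => hzerosym K i j hij⟩
    · intro K i j
      exact hC2 K i j
  · -- connectedness
    intro a b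
    obtain ⟨y, hy⟩ := hKne b
    have hyT : y ∈ T \ ⋃₀ 𝒜 := chamber_subset b.2 hy
    set Sep : {K : Set (Vr r) // K ∈ chambersOf 𝒜 T} → Set (Set (Vr r)) := fun K =>
      {H | H ∈ 𝒜 ∧ ∃ β, β ∈ R ∧ H = dualKer β ∧ (∀ x ∈ K.1, 0 < β x) ∧ β y < 0}
      with hSepdef
    have hSepfin : ∀ K, (Sep K).Finite := by
      intro K
      obtain ⟨x, hx⟩ := hKne K
      have hxT : x ∈ T := (chamber_subset K.2 hx).1
      apply Set.Finite.subset (sep_subset_finite hTits.toIsHyperplaneArrangement hxT hyT.1)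
      rintro H ⟨h𝒜, β, hβR, rfl, hpos, hy'⟩
      exact ⟨h𝒜, β, rfl, hpos x hx, hy'⟩
    have hmem : ∀ K k, ind K k y < 0 → dualKer (ind K k) ∈ Sep K := fun K k hk =>
      ⟨hker𝒜 K k, ind K k, hindR K k, rfl, (hroot K k).2.2, hk⟩
    have hbase : ∀ K, (∀ k, ¬ ind K k y < 0) → K = b := by
      intro K h
      have hypos : ∀ k, 0 < ind K k y := by
        intro k
        rcases lt_trichotomy (ind K k y) 0 with h1 | h1 | h1
        · exact absurd h1 (h k)
        · exact absurd ⟨_, hker𝒜 K k, h1⟩ hyT.2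
        · exact h1
      have hyK : y ∈ K.1 := by rw [hKpos K]; exact hypos
      exact Subtype.ext (chamber_eq_of_mem K.2 b.2 hyK hy)
    have hstep : ∀ K k, ind K k y < 0 → Sep (ρ k K) = Sep K \ {dualKer (ind K k)} := by
      intro K k hk
      set L := ρ k K with hLdef
      have hLk : dualKer (ind L k) = dualKer (ind K k) := by
        rw [hLdef, (hcompat k K).1, dualKer_neg]
      have hinvK : ρ k L = K := hinv k K
      ext H
      constructor
      · rintro ⟨h𝒜, β, hβR, rfl, hposL, hβy⟩
        have hne : dualKer β ≠ dualKer (ind L k) := by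
          intro heq
          obtain ⟨t, ht0, hts⟩ := eq_smul_of_dualKer_eq (hind0 L k) heq.symm
          obtain ⟨u, hu⟩ := hKne L
          have h1 : 0 < β u := hposL u hu
          have h2 : 0 < ind L k u := (hroot L k).2.2 u hu
          have h3 : β u = t * ind L k u := by rw [hts]; simp [smul_eq_mul]
          have ht : 0 < t := by nlinarith
          have h4 : ind L k y = -(ind K k y) := by
            rw [hLdef, (hcompat k K).1]
            simp
          have h5 : β y = t * ind L k y := by rw [hts]; simp [smul_eq_mul]
          rw [h4] at h5
          nlinarith
        refine ⟨⟨h𝒜, β, hβR, rfl, ?_, hβy⟩, ?_⟩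
        · have := htrans L k β hβR hposL hne
          rwa [hinvK] at this
        · simp only [Set.mem_singleton_iff]
          intro heq
          exact hne (heq.trans hLk.symm)
      · rintro ⟨⟨h𝒜, β, hβR, rfl, hposK, hβy⟩, hne'⟩
        have hne : dualKer β ≠ dualKer (ind K k) := fun h => hne' h
        exact ⟨h𝒜, β, hβR, rfl, htrans K k β hβR hposK hne, hβy⟩
    have main : ∀ (n : ℕ) (K), (Sep K).ncard ≤ n → ∃ f, WeylHom ρ C K b f := by
      intro n
      induction n with
      | zero =>
        intro K hn
        by_cases hex : ∃ k, ind K k y < 0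
        · exfalso
          obtain ⟨k, hk⟩ := hex
          have h1 : (Sep K).ncard = 0 := Nat.le_zero.1 hn
          have h2 : Sep K = ∅ := ((Set.ncard_eq_zero (hSepfin K)).1 h1)
          exact absurd (hmem K k hk) (by rw [h2]; exact Set.notMem_empty _)
        · push_neg at hex
          obtain rfl := hbase K fun k => not_lt.2 (hex k)
          exact ⟨_, WeylHom.id K⟩
      | succ n ih =>
        intro K hn
        by_cases hex : ∃ k, ind K k y < 0
        · obtain ⟨k, hk⟩ := hex
          have hL := hstep K k hk
          have hpos : 0 < (Sep K).ncard :=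
            (Set.ncard_pos (hSepfin K)).2 ⟨_, hmem K k hk⟩
          have hcard : (Sep (ρ k K)).ncard ≤ n := by
            rw [hL, Set.ncard_diff_singleton_of_mem (hmem K k hk)]
            omega
          obtain ⟨f, hf⟩ := ih _ hcard
          exact ⟨_, weylHom_trans (WeylHom.comp k (WeylHom.id K)) hf⟩
        · push_neg at hex
          obtain rfl := hbase K fun k => not_lt.2 (hex k)
          exact ⟨_, WeylHom.id K⟩
    exact main _ a le_rfl
end
end

section
/- Let (𝒜,T) be a crystallographic Tits arrangement with respect to R. Then the Cartan graph 𝒞(𝒜,T,R) is simply connected: for every chamber K, the only morphism in Hom(K,K) of its Weyl groupoid is the identity. -/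
open Set

noncomputable section

section AuxProof

lemma dual_eq_smul_of_ker {W : Type*} [AddCommGroup W] [Module ℝ W]
    {α β : Module.Dual ℝ W} {v : W} (hv : α v ≠ 0)
    (h : ∀ x, α x = 0 → β x = 0) : β = (β v / α v) • α := by
  ext x
  have h0 : α (x - (α x / α v) • v) = 0 := by
    simp only [map_sub, map_smul, smul_eq_mul]
    field_simp
    ring
  have h1 := h _ h0
  simp only [map_sub, map_smul, smul_eq_mul, sub_eq_zero] at h1
  simp only [LinearMap.smul_apply, smul_eq_mul]
  rw [h1]; ring

lemma rootBasis_linearIndependent {r : ℕ} {𝒜 : Set (Set (Vr r))} {T : Set (Vr r)}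
    {R : Set (Module.Dual ℝ (Vr r))} (hTits : IsTitsArrangement 𝒜 T)
    (hR : IsAssociatedRootSystem 𝒜 R) {K : Set (Vr r)} (hK : K ∈ chambersOf 𝒜 T)
    {S : Fin r → Module.Dual ℝ (Vr r)} (hrange : Set.range S = rootBasisOf R K) :
    LinearIndependent ℝ S := by
  classical
  obtain ⟨b0, hKeq0⟩ := hTits.simplicial K hK
  have hr : Module.finrank ℝ (Vr r) = r := Module.finrank_fin_fun ℝ
  set b : Module.Basis (Fin r) ℝ (Module.Dual ℝ (Vr r)) := b0.reindex (finCongr hr) with hbdef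
  have hKeq : K = {v | ∀ i : Fin r, 0 < b i v} := by
    rw [hKeq0]
    ext v
    constructor
    · intro h i
      simpa [hbdef, Module.Basis.reindex_apply] using h ((finCongr hr).symm i)
    · intro h i
      simpa [hbdef, Module.Basis.reindex_apply] using h (finCongr hr i)
  set E : Module.Basis (Fin r) ℝ (Vr r) := b.dualBasis.map (Module.evalEquiv ℝ (Vr r)).symm with hEdef
  have hbe : ∀ i j : Fin r, b j (E i) = if i = j then 1 else 0 := by
    intro i j
    have h1 : Module.evalEquiv ℝ (Vr r) (E i) = b.dualBasis i := by
      simp [hEdef]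
    have h2 : (Module.evalEquiv ℝ (Vr r) (E i)) (b j) = b j (E i) := by
      simp [Module.evalEquiv_apply]
    rw [← h2, h1, Module.Basis.dualBasis_apply_self]
    simp [eq_comm]
  set w : Vr r := ∑ i, E i with hwdef
  have hbw : ∀ j, b j w = 1 := by
    intro j
    rw [hwdef, map_sum]
    simp [hbe]
  have hwK : w ∈ K := by
    rw [hKeq]; intro i; rw [hbw]; norm_num
  have cont : ∀ φ : Module.Dual ℝ (Vr r), Continuous φ := fun φ =>
    φ.continuous_of_finiteDimensional
  have hclos1 : closure K ⊆ {v | ∀ j, 0 ≤ b j v} := by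
    apply closure_minimal
    · rw [hKeq]; intro v hv j; exact (hv j).le
    · have : {v : Vr r | ∀ j, 0 ≤ b j v} = ⋂ j, {v | 0 ≤ b j v} := by ext; simp
      rw [this]
      exact isClosed_iInter fun j => isClosed_le continuous_const (cont (b j))
  have hclos2 : ∀ v : Vr r, (∀ j, 0 ≤ b j v) → v ∈ closure K := by
    intro v hv
    have h1 : Filter.Tendsto (fun n : ℕ => (1 / (n + 1) : ℝ)) Filter.atTop (nhds 0) :=
      tendsto_one_div_add_atTop_nhds_zero_nat
    have htend : Filter.Tendsto (fun n : ℕ => v + (1 / (n + 1) : ℝ) • w)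
        Filter.atTop (nhds v) := by
      have := (h1.smul_const w).const_add v
      simpa using this
    refine mem_closure_of_tendsto htend ?_
    filter_upwards with n
    rw [hKeq]
    intro j
    have hc : (0:ℝ) < 1 / (n + 1) := by positivity
    show 0 < b j (v + (1 / (n + 1) : ℝ) • w)
    rw [map_add, map_smul, hbw, smul_eq_mul, mul_one]
    have := hv j
    linarith
  have hEclos : ∀ i, E i ∈ closure K := by
    intro i
    apply hclos2
    intro j
    rw [hbe]
    split_ifs <;> norm_num
  have hexp : ∀ φ : Module.Dual ℝ (Vr r), φ = ∑ i, φ (E i) • b i := by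
    intro φ
    refine E.ext fun m => ?_
    rw [LinearMap.sum_apply]
    simp [LinearMap.smul_apply, hbe, mul_ite, Finset.sum_ite_eq]
  have hrepr : ∀ v : Vr r, v = ∑ m, b m v • E m := by
    intro v
    have hb0 : ∀ n, b n (v - ∑ m, b m v • E m) = 0 := by
      intro n
      rw [map_sub, map_sum]
      simp [map_smul, hbe, mul_ite, Finset.sum_ite_eq]
    have hφ0 : ∀ φ : Module.Dual ℝ (Vr r), φ (v - ∑ m, b m v • E m) = 0 := by
      intro φ
      have h2 := congrArg (fun ψ : Module.Dual ℝ (Vr r) =>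
        ψ (v - ∑ m, b m v • E m)) (hexp φ)
      simp only [LinearMap.sum_apply, LinearMap.smul_apply, smul_eq_mul] at h2
      rw [h2]
      simp [hb0]
    have := (Module.forall_dual_apply_eq_zero_iff ℝ (v - ∑ m, b m v • E m)).mp hφ0
    exact (sub_eq_zero.mp this)
  have coefnn : ∀ α ∈ rootBasisOf R K, ∀ i, 0 ≤ α (E i) := by
    intro α hα i
    have hKle : closure K ⊆ {x | 0 ≤ α x} :=
      closure_minimal (fun x hx => (hα.2.2 x hx).le)
        (isClosed_le continuous_const (cont α))
    exact hKle (hEclos i)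
  have hposw : ∀ α ∈ rootBasisOf R K, 0 < α w := fun α hα => hα.2.2 w hwK
  have hker_sub : ∀ α ∈ rootBasisOf R K, ∀ m, α (E m) ≠ 0 →
      ∀ x, α x = 0 → b m x = 0 := by
    intro α hα m hm x hx
    have hspan := hα.2.1.2.2
    have hsub : dualKer α ∩ closure K ⊆ (LinearMap.ker (b m) : Set (Vr r)) := by
      rintro y ⟨hy1, hy2⟩
      have hy1' : α y = 0 := hy1
      have hynn : ∀ j, 0 ≤ b j y := hclos1 hy2
      have hsum : ∑ i, α (E i) * b i y = 0 := by
        have h2 := congrArg (fun ψ : Module.Dual ℝ (Vr r) => ψ y) (hexp α)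
        simp only [LinearMap.sum_apply, LinearMap.smul_apply, smul_eq_mul] at h2
        rw [← h2]; exact hy1'
      have hterm : ∀ i ∈ Finset.univ, (0:ℝ) ≤ α (E i) * b i y :=
        fun i _ => mul_nonneg (coefnn α hα i) (hynn i)
      have h3 := (Finset.sum_eq_zero_iff_of_nonneg hterm).mp hsum m (Finset.mem_univ m)
      have : b m y = 0 := by
        rcases mul_eq_zero.mp h3 with h | h
        · exact absurd h hm
        · exact h
      exact this
    have hle : Submodule.span ℝ (dualKer α ∩ closure K) ≤ LinearMap.ker (b m) :=
      Submodule.span_le.mpr hsub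
    have hx' : x ∈ (Submodule.span ℝ (dualKer α ∩ closure K) : Set (Vr r)) := by
      rw [hspan]; exact hx
    exact hle hx'
  have hmul : ∀ α ∈ rootBasisOf R K, ∀ m, α (E m) ≠ 0 →
      b m = (b m w / α w) • α := by
    intro α hα m hm
    exact dual_eq_smul_of_ker (ne_of_gt (hposw α hα)) (hker_sub α hα m hm)
  have huniq : ∀ α ∈ rootBasisOf R K, ∃! m, α (E m) ≠ 0 := by
    intro α hα
    have hne : α ≠ 0 := by
      intro h0
      have := hposw α hα
      rw [h0] at this
      simp at this
    have hex : ∃ m, α (E m) ≠ 0 := by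
      by_contra h
      push_neg at h
      apply hne
      rw [hexp α]
      exact Finset.sum_eq_zero fun i _ => by rw [h i, zero_smul]
    obtain ⟨m, hm⟩ := hex
    refine ⟨m, hm, ?_⟩
    intro k hk
    by_contra hkm
    have h1 := hmul α hα m hm
    have e1 := congrArg (fun φ : Module.Dual ℝ (Vr r) => φ (E m)) h1
    have e2 := congrArg (fun φ : Module.Dual ℝ (Vr r) => φ (E k)) h1
    simp only [LinearMap.smul_apply, smul_eq_mul] at e1 e2
    rw [hbe m m] at e1
    rw [hbe k m] at e2
    simp only [if_pos rfl, if_neg hkm] at e1 e2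
    have hcm : b m w / α w ≠ 0 := by
      intro h0
      rw [h0, zero_mul] at e1
      exact one_ne_zero e1
    have hzero : α (E k) = 0 := by
      rcases mul_eq_zero.mp e2.symm with h | h
      · exact absurd h hcm
      · exact h
    exact hk hzero
  have hmem : ∀ i, S i ∈ rootBasisOf R K := by
    intro i; rw [← hrange]; exact Set.mem_range_self i
  choose J hJ1 hJ2 using fun i => huniq (S i) (hmem i)
  have hSfact : ∀ i, S i = S i (E (J i)) • b (J i) := by
    intro i
    conv_lhs => rw [hexp (S i)]
    refine Finset.sum_eq_single (J i) (fun m _ hm => ?_) (fun h => absurd (Finset.mem_univ _) h)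
    have : S i (E m) = 0 := by
      by_contra hc
      exact hm (hJ2 i m hc)
    rw [this, zero_smul]
  have hJsurj : Function.Surjective J := by
    intro j
    have hbj1 : b j (E j) = 1 := by rw [hbe]; simp
    have hwall : IsWall K (dualKer (b j)) := by
      refine ⟨⟨b j, b.ne_zero j, rfl⟩, ?_, ?_⟩
      · rw [Set.eq_empty_iff_forall_notMem]
        rintro x ⟨hx1, hx2⟩
        rw [hKeq] at hx2
        have h1 : 0 < b j x := hx2 j
        have hx1' : b j x = 0 := hx1
        exact h1.ne' hx1'
      · apply subset_antisymm
        · have hsub : dualKer (b j) ∩ closure K ⊆ (LinearMap.ker (b j) : Set (Vr r)) :=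
            fun x hx => hx.1
          intro x hx
          exact (Submodule.span_le.mpr hsub) hx
        · intro x hx
          have hx' : b j x = 0 := hx
          rw [hrepr x]
          apply Submodule.sum_mem
          intro m _
          by_cases hmj : m = j
          · subst hmj
            rw [hx', zero_smul]
            exact Submodule.zero_mem _
          · apply Submodule.smul_mem
            apply Submodule.subset_span
            constructor
            · show b j (E m) = 0
              rw [hbe]
              simp [hmj]
            · exact hEclos m
    have hA : dualKer (b j) ∈ 𝒜 := hTits.thin K hK _ hwall
    obtain ⟨α, hαR, hαker⟩ : ∃ α ∈ R, dualKer (b j) = dualKer α := by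
      rw [hR.2.2] at hA
      exact hA
    have hα0 : α ≠ 0 := fun h => hR.1 (h ▸ hαR)
    have hker : ∀ x, b j x = 0 → α x = 0 := by
      intro x hx
      have hmem' : x ∈ dualKer (b j) := hx
      rw [hαker] at hmem'
      exact hmem'
    have hteq : α = (α (E j) / b j (E j)) • b j :=
      dual_eq_smul_of_ker (by rw [hbj1]; norm_num) hker
    rw [hbj1, div_one] at hteq
    have ht0 : α (E j) ≠ 0 := by
      intro h0
      apply hα0
      rw [hteq, h0, zero_smul]
    obtain ⟨β, hβR, s, hs, hβeq⟩ : ∃ β ∈ R, ∃ s : ℝ, 0 < s ∧ β = s • b j := by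
      rcases lt_or_gt_of_ne ht0 with hneg | hpos
      · refine ⟨-α, hR.2.1 α hαR, -α (E j), by linarith, ?_⟩
        exact (congrArg Neg.neg hteq).trans (neg_smul (α (E j)) (b j)).symm
      · exact ⟨α, hαR, α (E j), hpos, hteq⟩
    have hs' : s ≠ 0 := hs.ne'
    have hβbasis : β ∈ rootBasisOf R K := by
      refine ⟨hβR, ?_, ?_⟩
      · have hdk : dualKer β = dualKer (b j) := by
          ext x
          simp only [dualKer, Set.mem_setOf_eq, hβeq, LinearMap.smul_apply, smul_eq_mul]
          constructor
          · intro h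
            rcases mul_eq_zero.mp h with h | h
            · exact absurd h hs'
            · exact h
          · intro h; rw [h, mul_zero]
        rw [hdk]; exact hwall
      · intro x hx
        rw [hKeq] at hx
        have h1 : 0 < b j x := hx j
        rw [hβeq]
        simp only [LinearMap.smul_apply, smul_eq_mul]
        exact mul_pos hs h1
    obtain ⟨i, hi⟩ : ∃ i, S i = β := by
      rw [← hrange] at hβbasis
      exact hβbasis
    refine ⟨i, ?_⟩
    have hne0 : S i (E j) ≠ 0 := by
      rw [hi, hβeq]
      simp only [LinearMap.smul_apply, smul_eq_mul, hbj1, mul_one]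
      exact hs'
    exact (hJ2 i j hne0).symm
  have hJinj : Function.Injective J := Finite.injective_iff_surjective.mpr hJsurj
  have li0 : LinearIndependent ℝ (b ∘ J) := b.linearIndependent.comp J hJinj
  have li1 := li0.units_smul (fun i => Units.mk0 (S i (E (J i))) (hJ1 i))
  have heq : ((fun i => Units.mk0 (S i (E (J i))) (hJ1 i)) • (b ∘ J)) = S := by
    funext i
    simp only [Pi.smul_apply', Function.comp_apply, Units.smul_def, Units.val_mk0]
    exact (hSfact i).symm
  exact heq ▸ li1

lemma weylHom_sum_invariant {r : ℕ} {A : Type*}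
    (ind : A → Fin r → Module.Dual ℝ (Vr r))
    (ρ : Fin r → A → A)
    (hcompat : ∀ (i : Fin r) (K : A), ind (ρ i K) i = -(ind K i))
    (C : A → Matrix (Fin r) (Fin r) ℤ)
    (hC : ∀ K i j, ind (ρ i K) j = ind K j - C K i j • ind K i)
    {a c : A} {f : (Fin r → ℤ) → (Fin r → ℤ)} (h : WeylHom ρ C a c f)
    (v : Fin r → ℤ) (x : Vr r) :
    ∑ i, ((f v i : ℝ)) * ind c i x = ∑ i, ((v i : ℝ)) * ind a i x := by
  induction h with
  | id => rfl
  | @comp d f i hf ih =>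
    have key : ∑ k, ((gcmSigma (C d) i (f v) k : ℝ)) * ind (ρ i d) k x
        = ∑ k, ((f v k : ℝ)) * ind d k x := by
      have hpti : ind (ρ i d) i x = -(ind d i x) := by
        have h := congrArg (fun φ : Module.Dual ℝ (Vr r) => φ x) (hcompat i d)
        simp only [LinearMap.neg_apply] at h
        exact h
      have hpt : ∀ k, ind (ρ i d) k x = ind d k x - (C d i k : ℝ) * ind d i x := by
        intro k
        have h := congrArg (fun φ : Module.Dual ℝ (Vr r) => φ x) (hC d i k)
        simp only [LinearMap.sub_apply] at h
        rw [h]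
        congr 1
        have h2 : ((C d i k : ℤ) • ind d i) x = ((C d i k : ℝ)) • (ind d i x) := by
          rw [← Int.cast_smul_eq_zsmul ℝ]
          rfl
        simpa [smul_eq_mul] using h2
      simp only [gcmSigma]
      push_cast
      simp only [sub_mul, ite_mul, zero_mul, Finset.sum_sub_distrib]
      rw [Finset.sum_ite_eq' Finset.univ i
        (fun k => (∑ j, (C d i j : ℝ) * (f v j : ℝ)) * ind (ρ i d) k x)]
      simp only [Finset.mem_univ, if_true]
      rw [hpti]
      simp only [hpt, mul_sub, Finset.sum_sub_distrib]
      have hms : ∑ k, (f v k : ℝ) * ((C d i k : ℝ) * ind d i x)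
          = (∑ j, (C d i j : ℝ) * (f v j : ℝ)) * ind d i x := by
        rw [Finset.sum_mul]
        exact Finset.sum_congr rfl fun k _ => by ring
      rw [hms]
      ring
    calc ∑ k, (((gcmSigma (C d) i ∘ f) v k : ℝ)) * ind (ρ i d) k x
        = ∑ k, ((gcmSigma (C d) i (f v) k : ℝ)) * ind (ρ i d) k x := rfl
      _ = ∑ k, ((f v k : ℝ)) * ind d k x := key
      _ = ∑ i, ((v i : ℝ)) * ind a i x := ih

end AuxProof

/-- the Cartan graph `𝒞(𝒜,T,R)` of a crystallographic Tits arrangement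
is simply connected: for every chamber `K` the only morphism in `Hom(K,K)` of its Weyl
groupoid is the identity. -/
theorem statement_4 {r : ℕ} (𝒜 : Set (Set (Vr r))) (T : Set (Vr r))
    (R : Set (Module.Dual ℝ (Vr r)))
    (hTits : IsTitsArrangement 𝒜 T) (hR : IsAssociatedRootSystem 𝒜 R)
    (hcrys : IsCrystallographic 𝒜 T R)
    (ind : {K : Set (Vr r) // K ∈ chambersOf 𝒜 T} → Fin r → Module.Dual ℝ (Vr r))
    (hind : ∀ K, Function.Injective (ind K) ∧ Set.range (ind K) = rootBasisOf R K.1)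
    (ρ : Fin r → {K : Set (Vr r) // K ∈ chambersOf 𝒜 T} →
      {K : Set (Vr r) // K ∈ chambersOf 𝒜 T})
    (hρ : ∀ i K, ρ i K ≠ K ∧
      (Submodule.span ℝ (closure K.1 ∩ closure (ρ i K).1) : Set (Vr r)) =
        dualKer (ind K i))
    (hcompat : ∀ i K, ind (ρ i K) i = -(ind K i) ∧
      ∀ j, ind (ρ i K) j ∈ Submodule.span ℝ {ind K j, ind K i})
    (C : {K : Set (Vr r) // K ∈ chambersOf 𝒜 T} → Matrix (Fin r) (Fin r) ℤ)
    (hC : ∀ K i j, ind (ρ i K) j = ind K j - C K i j • ind K i) :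
    CGSimplyConnected ρ C := by
  intro a f hf
  funext v
  have li : LinearIndependent ℝ (ind a) :=
    rootBasis_linearIndependent hTits hR a.2 (hind a).2
  have hsum := weylHom_sum_invariant ind ρ (fun i K => (hcompat i K).1) C hC hf v
  have h0 : ∑ i, (((f v i - v i : ℤ) : ℝ)) • ind a i = 0 := by
    refine LinearMap.ext fun x => ?_
    simp only [LinearMap.sum_apply, LinearMap.smul_apply, smul_eq_mul,
      LinearMap.zero_apply, Int.cast_sub, sub_mul, Finset.sum_sub_distrib]
    rw [hsum x, sub_self]
  have hz := Fintype.linearIndependent_iff.mp li (fun i => ((f v i - v i : ℤ) : ℝ)) h0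
  funext i
  have h1 : ((f v i - v i : ℤ) : ℝ) = 0 := hz i
  have h2 : (f v i - v i : ℤ) = 0 := by exact_mod_cast h1
  show f v i = v i
  omega
end
end
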